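/- Let ε, ε′ > 0 and a, c > 0 be constants. Let (n_j), (k_j), (w_j), (d_j) be sequences of positive integers with n_j → ∞, k_j ≤ n_j, w_j ≤ n_j, d_j ≥ a·n_j^{ε}, w_j ≥ a·n_j^{ε′}, w_j·d_j ≤ c·n_j, and k_j/n_j ≥ 1 − h(w_j/n_j) for all j, where h is the binary entropy function. Then there exists a constant C > 0 such that, for all sufficiently large j, log₂ C(n_j, d_j) − log₂ C(k_j, d_j) ≤ C·log₂ n_j, where C(a,b) denotes the binomial coefficient. In other words, the ratio C(n_j,d_j)/C(k_j,d_j), which is the complexity of the Prange decoding algorithm up to polynomial factors, is bounded by a polynomial in n_j. -/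

import Mathlib

open Filter

/-- The binary entropy function `h(x) = −x·log₂ x − (1−x)·log₂(1−x)`
(with `h(0) = h(1) = 0`, since `Real.logb 2 0 = 0`). -/
noncomputable def binEntropy2 (x : ℝ) : ℝ :=
  -x * Real.logb 2 x - (1 - x) * Real.logb 2 (1 - x)

/-- Factorwise comparison of descending factorials. -/
lemma descFactorial_ratio {n k d : ℕ} (hdk : d ≤ k) (hkn : k ≤ n) :
    n.descFactorial d * (k - d + 1) ^ d ≤ k.descFactorial d * (n - d + 1) ^ d := by
  have h1 : ∀ i ∈ Finset.range d, (n - i) * (k - d + 1) ≤ (k - i) * (n - d + 1) := by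
    intro i hi
    rw [Finset.mem_range] at hi
    have hik : i ≤ k := le_trans hi.le hdk
    have hin : i ≤ n := le_trans hik hkn
    have hdn : d ≤ n := le_trans hdk hkn
    zify [hik, hin, hdk, hdn]
    have hnk : (0:ℤ) ≤ (n:ℤ) - (k:ℤ) := by omega
    have hdi : (0:ℤ) ≤ (d:ℤ) - 1 - (i:ℤ) := by omega
    nlinarith [mul_nonneg hnk hdi]
  calc n.descFactorial d * (k - d + 1) ^ d
      = ∏ i ∈ Finset.range d, (n - i) * (k - d + 1) := by
        rw [Finset.prod_mul_distrib, Finset.prod_const, Finset.card_range,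
          Nat.descFactorial_eq_prod_range]
    _ ≤ ∏ i ∈ Finset.range d, (k - i) * (n - d + 1) := Finset.prod_le_prod' h1
    _ = k.descFactorial d * (n - d + 1) ^ d := by
        rw [Finset.prod_mul_distrib, Finset.prod_const, Finset.card_range,
          Nat.descFactorial_eq_prod_range]

lemma choose_ratio {n k d : ℕ} (hdk : d ≤ k) (hkn : k ≤ n) :
    n.choose d * (k - d + 1) ^ d ≤ k.choose d * (n - d + 1) ^ d := by
  have h := descFactorial_ratio hdk hkn
  rw [Nat.descFactorial_eq_factorial_mul_choose, Nat.descFactorial_eq_factorial_mul_choose] at h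
  have := Nat.factorial_pos d
  calc n.choose d * (k - d + 1) ^ d
      = Nat.factorial d * (n.choose d * (k - d + 1) ^ d) / Nat.factorial d := by
        rw [Nat.mul_div_cancel_left _ this]
    _ ≤ Nat.factorial d * (k.choose d * (n - d + 1) ^ d) / Nat.factorial d := by
        apply Nat.div_le_div_right
        calc Nat.factorial d * (n.choose d * (k - d + 1) ^ d) = Nat.factorial d * n.choose d * (k - d + 1) ^ d := by ring
          _ ≤ Nat.factorial d * k.choose d * (n - d + 1) ^ d := h
          _ = Nat.factorial d * (k.choose d * (n - d + 1) ^ d) := by ring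
    _ = k.choose d * (n - d + 1) ^ d := Nat.mul_div_cancel_left _ this

/-- `log₂(1+x) ≤ 2x` for nonnegative `x`. -/
lemma logb_two_one_add_le {x : ℝ} (hx : 0 ≤ x) : Real.logb 2 (1 + x) ≤ 2 * x := by
  have h1 : Real.log (1 + x) ≤ x := by
    have := Real.log_le_sub_one_of_pos (show (0:ℝ) < 1 + x by linarith)
    linarith
  rw [Real.logb, div_le_iff₀ (Real.log_pos one_lt_two)]
  nlinarith [Real.log_two_gt_d9]

/-- `−ln(1−x) ≤ 2x` on `[0, 1/2]`. -/
lemma neg_log_one_sub_le {x : ℝ} (hx0 : 0 ≤ x) (hx : x ≤ 1/2) :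
    -(2 * x) ≤ Real.log (1 - x) := by
  have h1x : (0:ℝ) < 1 - x := by linarith
  rw [Real.le_log_iff_exp_le h1x]
  have h2 : 1 + 2 * x ≤ Real.exp (2 * x) := by
    have := Real.add_one_le_exp (2 * x); linarith
  have hE : 0 < Real.exp (2 * x) := Real.exp_pos _
  have hinv : Real.exp (-(2 * x)) * Real.exp (2 * x) = 1 := by
    rw [← Real.exp_add]; simp
  nlinarith [Real.exp_pos (-(2 * x))]

/-- Entropy bound: `h(x) ≤ −x log₂ x + 3x` on `(0, 1/2]`. -/
lemma binEntropy2_le {x : ℝ} (hx0 : 0 < x) (hx : x ≤ 1/2) :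
    binEntropy2 x ≤ -x * Real.logb 2 x + 3 * x := by
  have h1x : (0:ℝ) < 1 - x := by linarith
  have hlog : -(2 * x) ≤ Real.log (1 - x) := neg_log_one_sub_le hx0.le hx
  have hlogle : Real.log (1 - x) ≤ 0 := Real.log_nonpos (by linarith) (by linarith)
  have hkey : -((1 - x) * Real.logb 2 (1 - x)) ≤ 3 * x := by
    have hrw : -((1 - x) * Real.logb 2 (1 - x))
        = (1 - x) * (-Real.log (1 - x)) / Real.log 2 := by
      rw [Real.logb]; ring
    rw [hrw, div_le_iff₀ (Real.log_pos one_lt_two)]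
    nlinarith [Real.log_two_gt_d9, mul_nonneg hx0.le (neg_nonneg.2 hlogle)]
  unfold binEntropy2
  linarith

set_option maxHeartbeats 1000000 in
theorem stmt_9 (ε ε' a c : ℝ) (hε : 0 < ε) (hε' : 0 < ε') (ha : 0 < a) (hc : 0 < c)
    (n k w d : ℕ → ℕ)
    (hpos : ∀ j, 0 < n j ∧ 0 < k j ∧ 0 < w j ∧ 0 < d j)
    (hn : Tendsto n atTop atTop)
    (hkn : ∀ j, k j ≤ n j) (hwn : ∀ j, w j ≤ n j)
    (hd : ∀ j, a * (n j : ℝ) ^ ε ≤ (d j : ℝ))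
    (hw : ∀ j, a * (n j : ℝ) ^ ε' ≤ (w j : ℝ))
    (hwd : ∀ j, (w j : ℝ) * (d j : ℝ) ≤ c * (n j : ℝ))
    (hGV : ∀ j, 1 - binEntropy2 ((w j : ℝ) / (n j : ℝ)) ≤ (k j : ℝ) / (n j : ℝ)) :
    ∃ C > (0 : ℝ), ∀ᶠ j in atTop,
      Real.logb 2 ((n j).choose (d j) : ℝ) - Real.logb 2 ((k j).choose (d j) : ℝ)
        ≤ C * Real.logb 2 (n j : ℝ) := by
  refine ⟨8 * c, by positivity, ?_⟩
  have hnR : Tendsto (fun j => (n j : ℝ)) atTop atTop :=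
    tendsto_natCast_atTop_atTop.comp hn
  -- eventual conditions on x = n j (as real)
  have h2 : ∀ᶠ x : ℝ in atTop, 2 * c / a ≤ x ^ ε :=
    (tendsto_rpow_atTop hε).eventually_ge_atTop _
  have h3 : ∀ᶠ x : ℝ in atTop, 4 * c / a ≤ x ^ ε' :=
    (tendsto_rpow_atTop hε').eventually_ge_atTop _
  have h4 : ∀ᶠ x : ℝ in atTop, Real.logb 2 x + 3 ≤ a / (4 * c) * x ^ ε := by
    have hlit := (isLittleO_log_rpow_atTop hε).bound
      (show (0:ℝ) < a / (8 * c) * Real.log 2 by positivity)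
    have h5 : ∀ᶠ x : ℝ in atTop, (3:ℝ) / (a / (8 * c)) ≤ x ^ ε :=
      (tendsto_rpow_atTop hε).eventually_ge_atTop _
    filter_upwards [hlit, h5, eventually_ge_atTop (1:ℝ)] with x hx1 hx2 hx3
    have hxpow : (0:ℝ) ≤ x ^ ε := Real.rpow_nonneg (by linarith) _
    rw [Real.norm_eq_abs, Real.norm_eq_abs, abs_of_nonneg (Real.log_nonneg hx3),
      abs_of_nonneg hxpow] at hx1
    have hlog2 : (0:ℝ) < Real.log 2 := Real.log_pos one_lt_two
    have hb : Real.logb 2 x ≤ a / (8 * c) * x ^ ε := by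
      rw [Real.logb, div_le_iff₀ hlog2]
      calc Real.log x ≤ a / (8 * c) * Real.log 2 * x ^ ε := hx1
        _ = a / (8 * c) * x ^ ε * Real.log 2 := by ring
    have hb3 : (3:ℝ) ≤ a / (8 * c) * x ^ ε := by
      rw [div_le_iff₀ (show (0:ℝ) < a / (8 * c) by positivity)] at hx2
      linarith [hx2]
    have : a / (8 * c) * x ^ ε + a / (8 * c) * x ^ ε = a / (4 * c) * x ^ ε := by ring
    linarith
  filter_upwards [hnR.eventually (eventually_ge_atTop (8:ℝ)), hnR.eventually h2,
    hnR.eventually h3, hnR.eventually h4] with j hN8 hNε hNε' hNlog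
  obtain ⟨hn0, hk0, hw0, hd0⟩ := hpos j
  set N : ℝ := (n j : ℝ) with hNdef
  set K : ℝ := (k j : ℝ) with hKdef
  set W : ℝ := (w j : ℝ) with hWdef
  set D : ℝ := (d j : ℝ) with hDdef
  have hN0 : (0:ℝ) < N := by positivity
  have hW1 : (1:ℝ) ≤ W := Nat.one_le_cast.2 hw0
  have hD1 : (1:ℝ) ≤ D := Nat.one_le_cast.2 hd0
  have hK1 : (1:ℝ) ≤ K := Nat.one_le_cast.2 hk0
  have hWN : W ≤ N := Nat.cast_le.2 (hwn j)
  have hKN : K ≤ N := Nat.cast_le.2 (hkn j)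
  have hwdj : W * D ≤ c * N := hwd j
  have hL3 : (3:ℝ) ≤ Real.logb 2 N := by
    have h8 : Real.logb 2 (8:ℝ) = 3 := by
      have : (8:ℝ) = 2 ^ (3:ℕ) := by norm_num
      rw [this, Real.logb_pow, Real.logb_self_eq_one (by norm_num)]
      norm_num
    calc (3:ℝ) = Real.logb 2 8 := h8.symm
      _ ≤ Real.logb 2 N := Real.logb_le_logb_of_le one_lt_two (by norm_num) hN8
  set L : ℝ := Real.logb 2 N with hLdef
  -- d j ≥ 2c, hence w ≤ N/2
  have hdj : a * N ^ ε ≤ D := hd j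
  have hwj : a * N ^ ε' ≤ W := hw j
  have hD2c : 2 * c ≤ D := by
    have h1 : a * (2 * c / a) ≤ a * N ^ ε := mul_le_mul_of_nonneg_left hNε ha.le
    have h2 : a * (2 * c / a) = 2 * c := by field_simp
    linarith
  have hWhalf : W ≤ N / 2 := by
    have h1 : c * (W * 2) ≤ c * N := by
      calc c * (W * 2) = W * (2 * c) := by ring
        _ ≤ W * D := mul_le_mul_of_nonneg_left hD2c (by linarith)
        _ ≤ c * N := hwdj
    have h2 := le_of_mul_le_mul_left h1 hc
    linarith
  -- w j ≥ 4c, hence d ≤ N/4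
  have hW4c : 4 * c ≤ W := by
    have h1 : a * (4 * c / a) ≤ a * N ^ ε' := mul_le_mul_of_nonneg_left hNε' ha.le
    have h2 : a * (4 * c / a) = 4 * c := by field_simp
    linarith
  have hDquarter : D ≤ N / 4 := by
    have h1 : c * (D * 4) ≤ c * N := by
      calc c * (D * 4) = D * (4 * c) := by ring
        _ ≤ D * W := mul_le_mul_of_nonneg_left hW4c (by linarith)
        _ = W * D := by ring
        _ ≤ c * N := hwdj
    have h2 := le_of_mul_le_mul_left h1 hc
    linarith
  -- w * N^ε ≤ c*N/a  (i.e. a * w * N^ε ≤ c*N)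
  have hWpow : a * (W * N ^ ε) ≤ c * N := by
    calc a * (W * N ^ ε) = W * (a * N ^ ε) := by ring
      _ ≤ W * D := mul_le_mul_of_nonneg_left (hd j) (by linarith)
      _ ≤ c * N := hwdj
  -- entropy / GV bound : N - K ≤ W * (L + 3)
  have hWNpos : 0 < W / N := by positivity
  have hWNhalf : W / N ≤ 1 / 2 := by
    rw [div_le_iff₀ hN0]; linarith
  have hent := binEntropy2_le hWNpos hWNhalf
  have hGVj := hGV j
  have hNK : N - K ≤ N * binEntropy2 (W / N) := by
    have h := mul_le_mul_of_nonneg_left hGVj hN0.le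
    have h2 : N * ((k j : ℝ) / N) = K := by field_simp; rfl
    rw [h2] at h
    have h3 : N * (1 - binEntropy2 (W / N)) = N - N * binEntropy2 (W / N) := by ring
    linarith
  have hlogWN : Real.logb 2 (W / N) = Real.logb 2 W - L := by
    rw [Real.logb_div (by linarith : W ≠ 0) hN0.ne']
  have hlogW : 0 ≤ Real.logb 2 W := Real.logb_nonneg one_lt_two hW1
  have hNKW : N - K ≤ W * (L + 3) := by
    have h1 : N * binEntropy2 (W / N) ≤ N * (-(W / N) * Real.logb 2 (W / N) + 3 * (W / N)) :=
      mul_le_mul_of_nonneg_left hent hN0.le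
    have h2 : N * (-(W / N) * Real.logb 2 (W / N) + 3 * (W / N))
        = -W * (Real.logb 2 W - L) + 3 * W := by
      rw [hlogWN]; field_simp
    have h3 : 0 ≤ W * Real.logb 2 W := mul_nonneg (by linarith) hlogW
    have h4 : -W * (Real.logb 2 W - L) + 3 * W = W * (L + 3) - W * Real.logb 2 W := by ring
    linarith
  -- N - K ≤ N/4, using logb bound
  have hNK4 : N - K ≤ N / 4 := by
    have h1 : W * (L + 3) ≤ W * (a / (4 * c) * N ^ ε) :=
      mul_le_mul_of_nonneg_left hNlog (by linarith)
    have h2 : W * (a / (4 * c) * N ^ ε) = (a * (W * N ^ ε)) / (4 * c) := by ring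
    have h3 : (a * (W * N ^ ε)) / (4 * c) ≤ (c * N) / (4 * c) := by
      apply div_le_div_of_nonneg_right hWpow; positivity
    have h4 : (c * N) / (4 * c) = N / 4 := by field_simp
    linarith
  have hK3 : 3 * N / 4 ≤ K := by linarith
  have hKD : N / 2 ≤ K - D := by linarith
  have hdk : d j ≤ k j := by
    have hDK : D ≤ K := by linarith
    rw [hDdef, hKdef] at hDK
    exact_mod_cast hDK
  -- the combinatorial inequality, cast to ℝ
  have hchoose := choose_ratio hdk (hkn j)
  have hcast : ((n j).choose (d j) : ℝ) * (K - D + 1) ^ (d j)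
      ≤ ((k j).choose (d j) : ℝ) * (N - D + 1) ^ (d j) := by
    have := (Nat.cast_le (α := ℝ)).2 hchoose
    push_cast [Nat.cast_sub hdk, Nat.cast_sub (le_trans hdk (hkn j))] at this
    convert this using 2
  have hCn0 : (0:ℝ) < ((n j).choose (d j) : ℝ) := by
    exact_mod_cast Nat.choose_pos (le_trans hdk (hkn j))
  have hCk0 : (0:ℝ) < ((k j).choose (d j) : ℝ) := by
    exact_mod_cast Nat.choose_pos hdk
  have hKD1 : (0:ℝ) < K - D + 1 := by linarith
  have hND1 : (0:ℝ) < N - D + 1 := by linarith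
  -- take logs
  have hlogineq : Real.logb 2 ((n j).choose (d j) : ℝ) + (d j : ℝ) * Real.logb 2 (K - D + 1)
      ≤ Real.logb 2 ((k j).choose (d j) : ℝ) + (d j : ℝ) * Real.logb 2 (N - D + 1) := by
    have hl := Real.logb_le_logb_of_le one_lt_two
      (by positivity : (0:ℝ) < ((n j).choose (d j) : ℝ) * (K - D + 1) ^ (d j)) hcast
    rw [Real.logb_mul hCn0.ne' (by positivity), Real.logb_mul hCk0.ne' (by positivity),
      Real.logb_pow, Real.logb_pow] at hl
    exact hl
  -- ratio term
  set r : ℝ := (N - K) / (K - D + 1) with hrdef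
  have hr0 : 0 ≤ r := by
    apply div_nonneg (by linarith) hKD1.le
  have hsplit : N - D + 1 = (K - D + 1) * (1 + r) := by
    rw [hrdef]; field_simp; ring
  have hlogdiff : Real.logb 2 (N - D + 1) - Real.logb 2 (K - D + 1) = Real.logb 2 (1 + r) := by
    rw [hsplit, Real.logb_mul hKD1.ne' (by positivity)]; ring
  have hlogr : Real.logb 2 (1 + r) ≤ 2 * r := logb_two_one_add_le hr0
  -- final arithmetic
  have hA : D * (N - K) ≤ c * N * (L + 3) := by
    calc D * (N - K) ≤ D * (W * (L + 3)) := mul_le_mul_of_nonneg_left hNKW (by linarith)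
      _ = W * D * (L + 3) := by ring
      _ ≤ c * N * (L + 3) := mul_le_mul_of_nonneg_right hwdj (by linarith)
  have hfinal : D * (2 * r) ≤ 8 * c * L := by
    rw [hrdef]
    rw [show D * (2 * ((N - K) / (K - D + 1))) = (2 * (D * (N - K))) / (K - D + 1) by ring]
    rw [div_le_iff₀ hKD1]
    calc 2 * (D * (N - K)) ≤ 2 * (c * N * (L + 3)) := by linarith
      _ ≤ 2 * (c * N * (2 * L)) := by
          have h5 : c * N * (L + 3) ≤ c * N * (2 * L) :=
            mul_le_mul_of_nonneg_left (by linarith) (by positivity)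
          linarith
      _ = 8 * c * L * (N / 2) := by ring
      _ ≤ 8 * c * L * (K - D + 1) := by
          exact mul_le_mul_of_nonneg_left (by linarith)
            (mul_nonneg (by positivity) (by linarith))
  calc Real.logb 2 ((n j).choose (d j) : ℝ) - Real.logb 2 ((k j).choose (d j) : ℝ)
      ≤ (d j : ℝ) * (Real.logb 2 (N - D + 1) - Real.logb 2 (K - D + 1)) := by
        have e : (d j : ℝ) * (Real.logb 2 (N - D + 1) - Real.logb 2 (K - D + 1))
            = (d j : ℝ) * Real.logb 2 (N - D + 1) - (d j : ℝ) * Real.logb 2 (K - D + 1) := by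
          ring
        rw [e]; linarith
    _ = D * Real.logb 2 (1 + r) := by rw [hlogdiff]
    _ ≤ D * (2 * r) := mul_le_mul_of_nonneg_left hlogr (by linarith)
    _ ≤ 8 * c * L := hfinal
    _ = 8 * c * Real.logb 2 N := rfl
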